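/- arXiv:2308.12165 — 2 statements merged into one kernel-verified Lean document; each statement's English description precedes it below -/
import Mathlib

section
/- Let ([m],v,e) and ([n],w,f) be attributed simple graphs. Adjoin an auxiliary point x_* to X with d_X(x,x_*)^p = d_X(x_*,x)^p = C^p for all x ∈ X (and d_X(x_*,x_*) = 0), and enlarge both graphs to size m+n by setting v_i = x_* for m+1 ≤ i ≤ m+n and e_{ii'} = y₀ whenever max{i,i'} ≥ m+1, and analogously w_j = x_* for n+1 ≤ j ≤ m+n and f_{jj'} = y₀ whenever max{j,j'} ≥ n+1. Then d_{G,A}(([m],v,e),([n],w,f)) = min over π ∈ S_{m+n} of [Σ_{i∈[m+n]} d_X(v_i,w_{π(i)})^p + ½·Σ_{(i,i')∈[m+n]²} d_Y(e_{ii'},f_{π(i)π(i')})^p]^{1/p}. -/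
open Finset

section GraphMetricDefs

variable {X Y : Type*}

/-- Two attributed graphs `([m],v,e)` and `([n],w,f)` are equal (i.e. agree up to
relabeling of the vertices). -/
def GraphEqual {m n : ℕ} (v : Fin m → X) (e : Fin m → Fin m → Y)
    (w : Fin n → X) (f : Fin n → Fin n → Y) : Prop :=
  ∃ h : m = n, ∃ π : Equiv.Perm (Fin n),
    (∀ i : Fin m, v i = w (π (Fin.cast h i))) ∧
    (∀ i i' : Fin m, e i i' = f (π (Fin.cast h i)) (π (Fin.cast h i')))

/-- `e` is a valid edge-attribute map: symmetric with no-edge value `y₀` on the diagonal. -/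
def IsGraph {m : ℕ} (y₀ : Y) (e : Fin m → Fin m → Y) : Prop :=
  (∀ i i', e i i' = e i' i) ∧ ∀ i, e i i = y₀

variable [PseudoMetricSpace X] [PseudoMetricSpace Y]

/-- The expression in brackets (raised to power `1/p`) in the definition of the GTT
distance, for a given subset `I ⊆ [m]` and a permutation `π ∈ S_n`. -/
noncomputable def gttVal (y₀ : Y) (p C : ℝ) {m n : ℕ} (hmn : m ≤ n)
    (v : Fin m → X) (e : Fin m → Fin m → Y)
    (w : Fin n → X) (f : Fin n → Fin n → Y)
    (I : Finset (Fin m)) (π : Equiv.Perm (Fin n)) : ℝ :=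
  (((m : ℝ) + (n : ℝ) - 2 * (I.card : ℝ)) * C ^ p
    + ∑ i ∈ I, dist (v i) (w (π (Fin.castLE hmn i))) ^ p
    + (1/2) * ∑ i ∈ I, ∑ i' ∈ I,
        dist (e i i') (f (π (Fin.castLE hmn i)) (π (Fin.castLE hmn i'))) ^ p
    + (1/2) * ∑ q ∈ ((univ : Finset (Fin m × Fin m)) \ I ×ˢ I),
        dist (e q.1 q.2) y₀ ^ p
    + (1/2) * ∑ q ∈ ((univ : Finset (Fin n × Fin n)) \
        ((I.image fun i => π (Fin.castLE hmn i)) ×ˢ (I.image fun i => π (Fin.castLE hmn i)))),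
        dist y₀ (f q.1 q.2) ^ p) ^ (1/p)

/-- The graph transport-transform (GTT) distance of order `p` with vertex penalty `C`
between `([m],v,e)` and `([n],w,f)`, for `m ≤ n`. -/
noncomputable def dGTT (y₀ : Y) (p C : ℝ) {m n : ℕ} (hmn : m ≤ n)
    (v : Fin m → X) (e : Fin m → Fin m → Y)
    (w : Fin n → X) (f : Fin n → Fin n → Y) : ℝ :=
  Finset.inf' Finset.univ Finset.univ_nonempty
    fun Iπ : Finset (Fin m) × Equiv.Perm (Fin n) => gttVal y₀ p C hmn v e w f Iπ.1 Iπ.2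

/-- The GTT distance between two graphs of arbitrary sizes (extended by symmetry). -/
noncomputable def dGTT' (y₀ : Y) (p C : ℝ) {m n : ℕ}
    (v : Fin m → X) (e : Fin m → Fin m → Y)
    (w : Fin n → X) (f : Fin n → Fin n → Y) : ℝ :=
  if h : m ≤ n then dGTT y₀ p C h v e w f else dGTT y₀ p C (not_le.mp h).le w f v e

/-- The GOSPA1 distance of order `p` with penalties `C₁` (vertex) and `CY` (edge bound)
between `([m],v,e)` and `([n],w,f)`, for `m ≤ n`. -/
noncomputable def dGOSPA1 (p C₁ CY : ℝ) {m n : ℕ} (hmn : m ≤ n)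
    (v : Fin m → X) (e : Fin m → Fin m → Y)
    (w : Fin n → X) (f : Fin n → Fin n → Y) : ℝ :=
  ((n : ℝ) ^ (1/p))⁻¹ *
    Finset.inf' Finset.univ Finset.univ_nonempty fun π : Equiv.Perm (Fin n) =>
      (((n : ℝ) - (m : ℝ)) * C₁ ^ p
        + ∑ i : Fin m, dist (v i) (w (π (Fin.castLE hmn i))) ^ p
        + (1/2) * ((n : ℝ) - 1)⁻¹ *
            ∑ i : Fin m, ((∑ i' : Fin m,
                dist (e i i') (f (π (Fin.castLE hmn i)) (π (Fin.castLE hmn i'))) ^ p)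
              + ((n : ℝ) - (m : ℝ)) * CY ^ p)) ^ (1/p)

/-- The GOSPA1 distance between two graphs of arbitrary sizes (extended by symmetry). -/
noncomputable def dGOSPA1' (p C₁ CY : ℝ) {m n : ℕ}
    (v : Fin m → X) (e : Fin m → Fin m → Y)
    (w : Fin n → X) (f : Fin n → Fin n → Y) : ℝ :=
  if h : m ≤ n then dGOSPA1 p C₁ CY h v e w f
  else dGOSPA1 p C₁ CY (not_le.mp h).le w f v e

/-- The GOSPA2 distance of order `p` with penalty `C₂`
between `([m],v,e)` and `([n],w,f)`, for `m ≤ n`. -/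
noncomputable def dGOSPA2 (y₀ : Y) (p C₂ : ℝ) {m n : ℕ} (hmn : m ≤ n)
    (v : Fin m → X) (e : Fin m → Fin m → Y)
    (w : Fin n → X) (f : Fin n → Fin n → Y) : ℝ :=
  ((n : ℝ) ^ (1/p))⁻¹ *
    Finset.inf' Finset.univ Finset.univ_nonempty fun π : Equiv.Perm (Fin n) =>
      (((n : ℝ) - (m : ℝ)) * C₂ ^ p
        + ∑ i : Fin m, dist (v i) (w (π (Fin.castLE hmn i))) ^ p
        + (1/2) * ((n : ℝ) - 1)⁻¹ *
            ∑ i : Fin n, ∑ i' : Fin n,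
              (if h : (i : ℕ) < m ∧ (i' : ℕ) < m
               then dist (e ⟨i.1, h.1⟩ ⟨i'.1, h.2⟩) (f (π i) (π i')) ^ p
               else dist y₀ (f (π i) (π i')) ^ p)) ^ (1/p)

/-- The GOSPA2 distance between two graphs of arbitrary sizes (extended by symmetry). -/
noncomputable def dGOSPA2' (y₀ : Y) (p C₂ : ℝ) {m n : ℕ}
    (v : Fin m → X) (e : Fin m → Fin m → Y)
    (w : Fin n → X) (f : Fin n → Fin n → Y) : ℝ :=
  if h : m ≤ n then dGOSPA2 y₀ p C₂ h v e w f
  else dGOSPA2 y₀ p C₂ (not_le.mp h).le w f v e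

end GraphMetricDefs

private lemma aux_perm_extend {N : ℕ} (s : Finset (Fin N)) (g : Fin N → Fin N)
    (hg : Set.InjOn g s) : ∃ π : Equiv.Perm (Fin N), ∀ x ∈ s, π x = g x := by
  obtain ⟨e, he⟩ := Finset.exists_equiv_extend_of_card_eq
    (t := (univ : Finset (Fin N))) (by simp) (f := g) (by simp) hg
  refine ⟨e.trans (Equiv.subtypeUnivEquiv (by simp)), fun x hx => ?_⟩
  have := he x hx
  simpa [Equiv.subtypeUnivEquiv] using this

private lemma aux_sum_castLE {a b : ℕ} (h : a ≤ b) (g : Fin b → ℝ)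
    (hg : ∀ x : Fin b, ¬ ((x : ℕ) < a) → g x = 0) :
    ∑ x : Fin b, g x = ∑ j : Fin a, g (Fin.castLE h j) := by
  classical
  have hmap : ∑ x ∈ (univ.map ⟨Fin.castLE h, Fin.castLE_injective h⟩), g x
      = ∑ x : Fin b, g x := by
    refine Finset.sum_subset (Finset.subset_univ _) fun x _ hx => hg x ?_
    intro hxa
    exact hx (Finset.mem_map.2 ⟨⟨x.1, hxa⟩, Finset.mem_univ _, by
      apply Fin.ext; simp⟩)
  rw [← hmap, Finset.sum_map]
  rfl

private lemma aux_sum_ite_lt {a b : ℕ} (h : a ≤ b) (c : ℝ) :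
    (∑ x : Fin b, if (x : ℕ) < a then c else 0) = a * c := by
  rw [aux_sum_castLE h _ (fun x hx => if_neg hx)]
  simp [Fin.is_lt]

private lemma aux_filter_map {a b : ℕ} (h : a ≤ b) :
    (univ.filter (fun x : Fin b => (x : ℕ) < a))
      = univ.map ⟨Fin.castLE h, Fin.castLE_injective h⟩ := by
  ext x
  simp only [mem_filter, mem_univ, true_and, mem_map, Function.Embedding.coeFn_mk]
  constructor
  · intro hx; exact ⟨⟨x.1, hx⟩, by apply Fin.ext; simp⟩
  · rintro ⟨j, -, rfl⟩; simpa using j.isLt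

private lemma aux_sum_filter_lt {a b : ℕ} (h : a ≤ b) (g : Fin b → ℝ) :
    ∑ x ∈ univ.filter (fun x : Fin b => (x : ℕ) < a), g x
      = ∑ j : Fin a, g (Fin.castLE h j) := by
  rw [aux_filter_map h, Finset.sum_map]; rfl

private lemma gttVal_eq_cost
    {X X' Y : Type*} [PseudoMetricSpace X] [PseudoMetricSpace X'] [PseudoMetricSpace Y]
    (y₀ : Y) (p C : ℝ) (hp : 1 ≤ p)
    {m n : ℕ} (hmn : m ≤ n)
    (v : Fin m → X) (e : Fin m → Fin m → Y)
    (w : Fin n → X) (f : Fin n → Fin n → Y)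
    (ιX : X → X') (hιX : ∀ x x', dist (ιX x) (ιX x') = dist x x')
    (xstar : X')
    (hxstar : ∀ x, dist (ιX x) xstar ^ p = C ^ p ∧ dist xstar (ιX x) ^ p = C ^ p)
    (v' : Fin (m + n) → X')
    (hv' : ∀ i : Fin (m + n), v' i = if h : (i : ℕ) < m then ιX (v ⟨i.1, h⟩) else xstar)
    (e' : Fin (m + n) → Fin (m + n) → Y)
    (he' : ∀ i i' : Fin (m + n), e' i i' =
      if h : (i : ℕ) < m ∧ (i' : ℕ) < m then e ⟨i.1, h.1⟩ ⟨i'.1, h.2⟩ else y₀)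
    (w' : Fin (m + n) → X')
    (hw' : ∀ j : Fin (m + n), w' j = if h : (j : ℕ) < n then ιX (w ⟨j.1, h⟩) else xstar)
    (f' : Fin (m + n) → Fin (m + n) → Y)
    (hf' : ∀ j j' : Fin (m + n), f' j j' =
      if h : (j : ℕ) < n ∧ (j' : ℕ) < n then f ⟨j.1, h.1⟩ ⟨j'.1, h.2⟩ else y₀)
    (π : Equiv.Perm (Fin (m + n))) (I : Finset (Fin m)) (σ : Equiv.Perm (Fin n))
    (hI : ∀ i : Fin m, i ∈ I ↔ ((π (Fin.castLE (Nat.le_add_right m n) i) : ℕ) < n))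
    (hσ : ∀ i ∈ I, ((σ (Fin.castLE hmn i)) : ℕ)
        = ((π (Fin.castLE (Nat.le_add_right m n) i)) : ℕ)) :
    gttVal y₀ p C hmn v e w f I σ =
      ((∑ i : Fin (m + n), dist (v' i) (w' (π i)) ^ p)
        + (1/2) * ∑ i : Fin (m + n), ∑ i' : Fin (m + n),
            dist (e' i i') (f' (π i) (π i')) ^ p) ^ (1/p) := by
  classical
  have hppos : (0:ℝ) < p := lt_of_lt_of_le one_pos hp
  have h0p : (0:ℝ) ^ p = 0 := Real.zero_rpow (ne_of_gt hppos)
  set cm : Fin m → Fin (m+n) := Fin.castLE (Nat.le_add_right m n) with hcm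
  set s : Finset (Fin (m+n)) := univ.filter (fun x => (x:ℕ) < m) with hsdef
  have hsum_s : ∀ g : Fin (m+n) → ℝ, ∑ x ∈ s, g x = ∑ i : Fin m, g (cm i) :=
    fun g => aux_sum_filter_lt (Nat.le_add_right m n) g
  have hmems : ∀ x : Fin (m+n), x ∈ s ↔ (x:ℕ) < m := by
    intro x; simp [hsdef]
  have hv1 : ∀ i : Fin m, v' (cm i) = ιX (v i) := by
    intro i; rw [hv' (cm i), dif_pos (show ((cm i : Fin (m+n)):ℕ) < m from i.isLt)]; rfl
  have hv2 : ∀ x : Fin (m+n), ¬((x:ℕ) < m) → v' x = xstar :=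
    fun x hx => by rw [hv' x, dif_neg hx]
  have hw1 : ∀ (x : Fin (m+n)) (h : (x:ℕ) < n), w' x = ιX (w ⟨x.1, h⟩) :=
    fun x h => by rw [hw' x, dif_pos h]
  have hw2 : ∀ x : Fin (m+n), ¬((x:ℕ) < n) → w' x = xstar :=
    fun x hx => by rw [hw' x, dif_neg hx]
  have he1 : ∀ i i' : Fin m, e' (cm i) (cm i') = e i i' := by
    intro i i'
    rw [he' (cm i) (cm i'), dif_pos (⟨i.isLt, i'.isLt⟩ :
      ((cm i : Fin (m+n)):ℕ) < m ∧ ((cm i' : Fin (m+n)):ℕ) < m)]; rfl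
  have hey : ∀ x x' : Fin (m+n), ¬((x:ℕ) < m ∧ (x':ℕ) < m) → e' x x' = y₀ :=
    fun x x' hx => by rw [he' x x', dif_neg hx]
  have hfy : ∀ x x' : Fin (m+n), ¬((x:ℕ) < n ∧ (x':ℕ) < n) → f' x x' = y₀ :=
    fun x x' hx => by rw [hf' x x', dif_neg hx]
  have hf1 : ∀ a b : Fin n, f' (Fin.castLE (Nat.le_add_left n m) a)
      (Fin.castLE (Nat.le_add_left n m) b) = f a b := by
    intro a b
    rw [hf' _ _, dif_pos (⟨a.isLt, b.isLt⟩ :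
      ((Fin.castLE (Nat.le_add_left n m) a : Fin (m+n)):ℕ) < n ∧
      ((Fin.castLE (Nat.le_add_left n m) b : Fin (m+n)):ℕ) < n)]; rfl
  have hknot : ∀ i : Fin m, i ∉ I → ¬ ((π (cm i) : ℕ) < n) :=
    fun i hi h => hi ((hI i).2 h)
  have hkey : ∀ i ∈ I, w' (π (cm i)) = ιX (w (σ (Fin.castLE hmn i))) := by
    intro i hi
    have hlt : ((π (cm i)):ℕ) < n := (hI i).1 hi
    rw [hw1 _ hlt]
    congr 1
    exact congrArg w (Fin.ext ((hσ i hi)).symm)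
  have hkeyf : ∀ i ∈ I, ∀ i' ∈ I, f' (π (cm i)) (π (cm i'))
      = f (σ (Fin.castLE hmn i)) (σ (Fin.castLE hmn i')) := by
    intro i hi i' hi'
    rw [hf' _ _, dif_pos ⟨(hI i).1 hi, (hI i').1 hi'⟩]
    congr 1 <;> exact Fin.ext (hσ _ ‹_›).symm
  have hkm : I.card ≤ m := le_trans I.card_le_univ (by simp)
  -- vertex sum
  have hV : ∑ x : Fin (m+n), dist (v' x) (w' (π x)) ^ p
      = (∑ i ∈ I, dist (v i) (w (σ (Fin.castLE hmn i))) ^ p)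
        + (((m:ℝ) - I.card) + ((n:ℝ) - I.card)) * C ^ p := by
    rw [← Finset.sum_add_sum_compl s (fun x => dist (v' x) (w' (π x)) ^ p)]
    have hA : ∑ x ∈ s, dist (v' x) (w' (π x)) ^ p
        = (∑ i ∈ I, dist (v i) (w (σ (Fin.castLE hmn i))) ^ p)
          + ((m:ℝ) - I.card) * C ^ p := by
      rw [hsum_s]
      rw [← Finset.sum_add_sum_compl I (fun i => dist (v' (cm i)) (w' (π (cm i))) ^ p)]
      congr 1
      · exact Finset.sum_congr rfl (fun i hi => by rw [hv1 i, hkey i hi, hιX])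
      · calc ∑ i ∈ Iᶜ, dist (v' (cm i)) (w' (π (cm i))) ^ p
            = ∑ _i ∈ Iᶜ, C ^ p := Finset.sum_congr rfl (fun i hi => by
              rw [hv1 i, hw2 _ (hknot i (Finset.mem_compl.1 hi))]
              exact (hxstar (v i)).1)
          _ = ((m:ℝ) - I.card) * C ^ p := by
              rw [Finset.sum_const, Finset.card_compl, Fintype.card_fin,
                nsmul_eq_mul, Nat.cast_sub hkm]
    have hB : ∑ x ∈ sᶜ, dist (v' x) (w' (π x)) ^ p = ((n:ℝ) - I.card) * C ^ p := by
      have h1 : ∀ x ∈ sᶜ, dist (v' x) (w' (π x)) ^ p = dist xstar (w' (π x)) ^ p := by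
        intro x hx
        rw [hv2 x (by simpa [hmems] using Finset.mem_compl.1 hx)]
      rw [Finset.sum_congr rfl h1]
      have h2 : ∑ x ∈ sᶜ, dist xstar (w' (π x)) ^ p
          = (∑ x : Fin (m+n), dist xstar (w' (π x)) ^ p)
            - ∑ x ∈ s, dist xstar (w' (π x)) ^ p := by
        rw [← Finset.sum_add_sum_compl s (fun x => dist xstar (w' (π x)) ^ p)]; ring
      rw [h2]
      have h3 : ∑ x : Fin (m+n), dist xstar (w' (π x)) ^ p = (n:ℝ) * C ^ p := by
        rw [Equiv.sum_comp π (fun x => dist xstar (w' x) ^ p)]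
        have hpt : ∀ x : Fin (m+n), dist xstar (w' x) ^ p
            = if (x:ℕ) < n then C ^ p else 0 := by
          intro x
          by_cases hx : (x:ℕ) < n
          · rw [if_pos hx, hw1 x hx]; exact (hxstar _).2
          · rw [if_neg hx, hw2 x hx, dist_self, h0p]
        simp_rw [hpt]
        exact aux_sum_ite_lt (Nat.le_add_left n m) (C ^ p)
      have h4 : ∑ x ∈ s, dist xstar (w' (π x)) ^ p = (I.card : ℝ) * C ^ p := by
        rw [hsum_s]
        have hpt : ∀ i : Fin m, dist xstar (w' (π (cm i))) ^ p
            = if i ∈ I then C ^ p else 0 := by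
          intro i
          by_cases hi : i ∈ I
          · rw [if_pos hi, hw1 _ ((hI i).1 hi)]; exact (hxstar _).2
          · rw [if_neg hi, hw2 _ (hknot i hi), dist_self, h0p]
        simp_rw [hpt]
        rw [Finset.sum_ite_mem, Finset.univ_inter, Finset.sum_const, nsmul_eq_mul]
      rw [h3, h4]; ring
    rw [hA, hB]; ring
  -- edge sum
  have hE : (∑ x : Fin (m+n), ∑ x' : Fin (m+n), dist (e' x x') (f' (π x) (π x')) ^ p)
      = (∑ i ∈ I, ∑ i' ∈ I,
          dist (e i i') (f (σ (Fin.castLE hmn i)) (σ (Fin.castLE hmn i'))) ^ p)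
        + (∑ q ∈ ((univ : Finset (Fin m × Fin m)) \ I ×ˢ I), dist (e q.1 q.2) y₀ ^ p)
        + ∑ q ∈ ((univ : Finset (Fin n × Fin n)) \
            ((I.image fun i => σ (Fin.castLE hmn i)) ×ˢ
              (I.image fun i => σ (Fin.castLE hmn i)))),
            dist y₀ (f q.1 q.2) ^ p := by
    have hsplit : (∑ x : Fin (m+n), ∑ x' : Fin (m+n), dist (e' x x') (f' (π x) (π x')) ^ p)
        = (∑ q ∈ s ×ˢ s, dist (e' q.1 q.2) (f' (π q.1) (π q.2)) ^ p)
          + ∑ q ∈ ((univ : Finset (Fin (m+n) × Fin (m+n))) \ s ×ˢ s),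
              dist (e' q.1 q.2) (f' (π q.1) (π q.2)) ^ p := by
      rw [← Finset.sum_product', Finset.univ_product_univ,
        ← Finset.sum_sdiff (Finset.subset_univ (s ×ˢ s))]
      ring
    rw [hsplit]
    have hA : (∑ q ∈ s ×ˢ s, dist (e' q.1 q.2) (f' (π q.1) (π q.2)) ^ p)
        = (∑ i ∈ I, ∑ i' ∈ I,
            dist (e i i') (f (σ (Fin.castLE hmn i)) (σ (Fin.castLE hmn i'))) ^ p)
          + ∑ q ∈ ((univ : Finset (Fin m × Fin m)) \ I ×ˢ I), dist (e q.1 q.2) y₀ ^ p := by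
      rw [Finset.sum_product]
      simp_rw [hsum_s, he1]
      rw [← Finset.sum_product', Finset.univ_product_univ,
        ← Finset.sum_sdiff (Finset.subset_univ (I ×ˢ I)), add_comm]
      congr 1
      · rw [Finset.sum_product]
        exact Finset.sum_congr rfl (fun i hi => Finset.sum_congr rfl
          (fun i' hi' => by rw [hkeyf i hi i' hi']))
      · refine Finset.sum_congr rfl (fun q hq => ?_)
        obtain ⟨-, hq2⟩ := Finset.mem_sdiff.1 hq
        have hni : ¬(q.1 ∈ I ∧ q.2 ∈ I) := by simpa [Finset.mem_product] using hq2
        rw [hfy _ _ (fun hc => hni ⟨(hI _).2 hc.1, (hI _).2 hc.2⟩)]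
    have hB : (∑ q ∈ ((univ : Finset (Fin (m+n) × Fin (m+n))) \ s ×ˢ s),
          dist (e' q.1 q.2) (f' (π q.1) (π q.2)) ^ p)
        = ∑ q ∈ ((univ : Finset (Fin n × Fin n)) \
            ((I.image fun i => σ (Fin.castLE hmn i)) ×ˢ
              (I.image fun i => σ (Fin.castLE hmn i)))),
            dist y₀ (f q.1 q.2) ^ p := by
      have hb1 : ∀ q ∈ ((univ : Finset (Fin (m+n) × Fin (m+n))) \ s ×ˢ s),
          dist (e' q.1 q.2) (f' (π q.1) (π q.2)) ^ p
            = dist y₀ (f' (π q.1) (π q.2)) ^ p := by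
        intro q hq
        obtain ⟨-, hq2⟩ := Finset.mem_sdiff.1 hq
        have : ¬((q.1:ℕ) < m ∧ (q.2:ℕ) < m) := by
          simpa [Finset.mem_product, hmems] using hq2
        rw [hey _ _ this]
      rw [Finset.sum_congr rfl hb1,
        Finset.sum_sdiff_eq_sub (Finset.subset_univ (s ×ˢ s))]
      have hb3 : (∑ q : Fin (m+n) × Fin (m+n), dist y₀ (f' (π q.1) (π q.2)) ^ p)
          = ∑ q : Fin n × Fin n, dist y₀ (f q.1 q.2) ^ p := by
        have hcomp := Equiv.sum_comp (Equiv.prodCongr π π)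
          (fun q : Fin (m+n) × Fin (m+n) => dist y₀ (f' q.1 q.2) ^ p)
        simp only [Equiv.prodCongr_apply, Prod.map] at hcomp
        rw [hcomp]
        have step1 : ∀ x : Fin (m+n), ¬((x:ℕ) < n) →
            (∑ y : Fin (m+n), dist y₀ (f' x y) ^ p) = 0 :=
          fun x hx => Finset.sum_eq_zero (fun y _ => by
            rw [hfy x y (fun hc => hx hc.1), dist_self, h0p])
        have step2 : ∀ (j : Fin n) (y : Fin (m+n)), ¬((y:ℕ) < n) →
            dist y₀ (f' (Fin.castLE (Nat.le_add_left n m) j) y) ^ p = 0 :=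
          fun j y hy => by rw [hfy _ y (fun hc => hy hc.2), dist_self, h0p]
        rw [← Finset.univ_product_univ, Finset.sum_product,
          aux_sum_castLE (Nat.le_add_left n m) _ step1]
        rw [Finset.sum_congr rfl
          (fun j _ => aux_sum_castLE (Nat.le_add_left n m) _ (step2 j))]
        rw [show (univ : Finset (Fin n × Fin n)) = univ ×ˢ univ from
          Finset.univ_product_univ.symm, Finset.sum_product]
        exact Finset.sum_congr rfl (fun j _ => Finset.sum_congr rfl
          (fun b _ => by rw [hf1]))
      have hb4 : (∑ q ∈ s ×ˢ s, dist y₀ (f' (π q.1) (π q.2)) ^ p)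
          = ∑ i ∈ I, ∑ i' ∈ I,
              dist y₀ (f (σ (Fin.castLE hmn i)) (σ (Fin.castLE hmn i'))) ^ p := by
        rw [Finset.sum_product]
        simp_rw [hsum_s]
        rw [← Finset.sum_product', Finset.univ_product_univ,
          ← Finset.sum_sdiff (Finset.subset_univ (I ×ˢ I))]
        have hz : (∑ q ∈ ((univ : Finset (Fin m × Fin m)) \ I ×ˢ I),
            dist y₀ (f' (π (cm q.1)) (π (cm q.2))) ^ p) = 0 :=
          Finset.sum_eq_zero (fun q hq => by
            obtain ⟨-, hq2⟩ := Finset.mem_sdiff.1 hq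
            have hni : ¬(q.1 ∈ I ∧ q.2 ∈ I) := by simpa [Finset.mem_product] using hq2
            rw [hfy _ _ (fun hc => hni ⟨(hI _).2 hc.1, (hI _).2 hc.2⟩), dist_self, h0p])
        rw [hz, zero_add, Finset.sum_product]
        exact Finset.sum_congr rfl (fun i hi => Finset.sum_congr rfl
          (fun i' hi' => by rw [hkeyf i hi i' hi']))
      have hinj : ∀ x ∈ I, ∀ y ∈ I,
          σ (Fin.castLE hmn x) = σ (Fin.castLE hmn y) → x = y :=
        fun x _ y _ h => Fin.castLE_injective hmn (σ.injective h)
      have hS3 : (∑ q ∈ ((univ : Finset (Fin n × Fin n)) \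
            ((I.image fun i => σ (Fin.castLE hmn i)) ×ˢ
              (I.image fun i => σ (Fin.castLE hmn i)))),
            dist y₀ (f q.1 q.2) ^ p)
          = (∑ q : Fin n × Fin n, dist y₀ (f q.1 q.2) ^ p)
            - ∑ i ∈ I, ∑ i' ∈ I,
                dist y₀ (f (σ (Fin.castLE hmn i)) (σ (Fin.castLE hmn i'))) ^ p := by
        rw [Finset.sum_sdiff_eq_sub (Finset.subset_univ _)]
        congr 1
        rw [Finset.sum_product, Finset.sum_image hinj]
        exact Finset.sum_congr rfl (fun i hi => Finset.sum_image hinj)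
      rw [hb3, hb4, hS3]
    rw [hA, hB]
  simp only [gttVal]
  congr 1
  rw [hV, hE]
  ring

private lemma exists_sigma {m n : ℕ} (hmn : m ≤ n) (π : Equiv.Perm (Fin (m+n))) :
    ∃ σ : Equiv.Perm (Fin n), ∀ i : Fin m,
      ((π (Fin.castLE (Nat.le_add_right m n) i)):ℕ) < n →
      ((σ (Fin.castLE hmn i)):ℕ) = ((π (Fin.castLE (Nat.le_add_right m n) i)):ℕ) := by
  classical
  set I : Finset (Fin m) :=
    univ.filter (fun i => ((π (Fin.castLE (Nat.le_add_right m n) i)):ℕ) < n) with hIdef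
  set g : Fin n → Fin n := fun j =>
    if h : (j:ℕ) < m then
      (if h2 : ((π (Fin.castLE (Nat.le_add_right m n) ⟨j.1, h⟩)):ℕ) < n
       then ⟨((π (Fin.castLE (Nat.le_add_right m n) ⟨j.1, h⟩)):ℕ), h2⟩ else j)
    else j with hgdef
  have hg : ∀ (i : Fin m) (hlt : ((π (Fin.castLE (Nat.le_add_right m n) i)):ℕ) < n),
      g (Fin.castLE hmn i) = ⟨((π (Fin.castLE (Nat.le_add_right m n) i)):ℕ), hlt⟩ := by
    intro i hlt
    show dite _ _ _ = _
    rw [dif_pos (show ((Fin.castLE hmn i : Fin n):ℕ) < m from i.isLt)]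
    exact dif_pos hlt
  have hinj : Set.InjOn g (I.image (Fin.castLE hmn)) := by
    intro a ha b hb hab
    simp only [coe_image, Set.mem_image, mem_coe] at ha hb
    obtain ⟨i, hi, rfl⟩ := ha
    obtain ⟨i', hi', rfl⟩ := hb
    have hlt := (mem_filter.1 hi).2
    have hlt' := (mem_filter.1 hi').2
    rw [hg i hlt, hg i' hlt'] at hab
    have hv := congrArg Fin.val hab
    have h1 : π (Fin.castLE (Nat.le_add_right m n) i)
        = π (Fin.castLE (Nat.le_add_right m n) i') := Fin.ext hv
    have h2 := Fin.castLE_injective (Nat.le_add_right m n) (π.injective h1)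
    rw [h2]
  obtain ⟨σ, hσ⟩ := aux_perm_extend _ g hinj
  refine ⟨σ, fun i hlt => ?_⟩
  have hiI : i ∈ I := mem_filter.2 ⟨mem_univ _, hlt⟩
  rw [hσ _ (Finset.mem_image_of_mem _ hiI), hg i hlt]

private lemma exists_pi {m n : ℕ} (hmn : m ≤ n) (I : Finset (Fin m))
    (σ : Equiv.Perm (Fin n)) :
    ∃ π : Equiv.Perm (Fin (m+n)),
      (∀ i : Fin m, i ∈ I ↔ ((π (Fin.castLE (Nat.le_add_right m n) i)):ℕ) < n) ∧
      ∀ i ∈ I, ((σ (Fin.castLE hmn i)):ℕ)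
          = ((π (Fin.castLE (Nat.le_add_right m n) i)):ℕ) := by
  classical
  set g : Fin (m+n) → Fin (m+n) := fun x =>
    if h : (x:ℕ) < m then
      (if (⟨x.1, h⟩ : Fin m) ∈ I
       then Fin.castLE (Nat.le_add_left n m) (σ (Fin.castLE hmn ⟨x.1, h⟩))
       else ⟨n + x.1, by omega⟩)
    else x with hgdef
  have hgi : ∀ i : Fin m, g (Fin.castLE (Nat.le_add_right m n) i)
      = if i ∈ I then Fin.castLE (Nat.le_add_left n m) (σ (Fin.castLE hmn i))
        else ⟨n + i.1, by omega⟩ := by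
    intro i
    show dite _ _ _ = _
    rw [dif_pos (show ((Fin.castLE (Nat.le_add_right m n) i : Fin (m+n)):ℕ) < m from i.isLt)]
    rfl
  have hval : ∀ i : Fin m, ((g (Fin.castLE (Nat.le_add_right m n) i)):ℕ)
      = if i ∈ I then ((σ (Fin.castLE hmn i)):ℕ) else n + i.1 := by
    intro i
    rw [hgi i]
    by_cases hi : i ∈ I
    · rw [if_pos hi, if_pos hi]; rfl
    · rw [if_neg hi, if_neg hi]
  have hinj : Set.InjOn g (univ.filter (fun x : Fin (m+n) => (x:ℕ) < m)) := by
    intro a ha b hb hab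
    simp only [coe_filter, mem_univ, true_and, Set.mem_setOf_eq] at ha hb
    have ha' : a = Fin.castLE (Nat.le_add_right m n) (⟨a.1, ha⟩ : Fin m) := Fin.ext rfl
    have hb' : b = Fin.castLE (Nat.le_add_right m n) (⟨b.1, hb⟩ : Fin m) := Fin.ext rfl
    rw [ha', hb'] at hab
    have hA' := hval ⟨a.1, ha⟩
    have hB' := hval ⟨b.1, hb⟩
    have this : (if (⟨a.1, ha⟩ : Fin m) ∈ I
          then ((σ (Fin.castLE hmn ⟨a.1, ha⟩)):ℕ) else n + ((⟨a.1, ha⟩ : Fin m):ℕ))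
        = (if (⟨b.1, hb⟩ : Fin m) ∈ I
          then ((σ (Fin.castLE hmn ⟨b.1, hb⟩)):ℕ) else n + ((⟨b.1, hb⟩ : Fin m):ℕ)) := by
      rw [← hA', ← hB']
      exact congrArg Fin.val hab
    apply Fin.ext
    split_ifs at this with hA hB hB
    · have h2 := Fin.castLE_injective hmn (σ.injective (Fin.ext this))
      have h3 : ((⟨a.1, ha⟩ : Fin m) : ℕ) = ((⟨b.1, hb⟩ : Fin m) : ℕ) := congrArg Fin.val h2
      exact h3
    · exfalso
      have hltn : ((σ (Fin.castLE hmn (⟨a.1, ha⟩ : Fin m))):ℕ) < n := (σ _).isLt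
      rw [this] at hltn
      omega
    · exfalso
      have hltn : ((σ (Fin.castLE hmn (⟨b.1, hb⟩ : Fin m))):ℕ) < n := (σ _).isLt
      rw [← this] at hltn
      omega
    · exact Nat.add_left_cancel this
  obtain ⟨π, hπ⟩ := aux_perm_extend _ g hinj
  have hπi : ∀ i : Fin m, π (Fin.castLE (Nat.le_add_right m n) i)
      = g (Fin.castLE (Nat.le_add_right m n) i) :=
    fun i => hπ _ (mem_filter.2 ⟨mem_univ _, i.isLt⟩)
  refine ⟨π, fun i => ?_, fun i hi => ?_⟩
  · rw [hπi i]
    constructor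
    · intro hi
      rw [hval i, if_pos hi]
      exact (σ _).isLt
    · intro hlt
      by_contra hi
      rw [hval i, if_neg hi] at hlt
      omega
  · rw [hπi i, hval i, if_pos hi]

/-- Proposition: GTT as optimal matching of graphs filled up to size `m+n`.
Adjoin an auxiliary point `x⋆` (in an extension `X'` of `X`) at distance-power `C^p` from
every point of `X`, enlarge both graphs to size `m+n` by auxiliary isolated vertices; then
the GTT distance equals the minimum over permutations `π ∈ S_{m+n}` of the matching cost. -/
theorem dGTT_eq_fillup_matching
    {X X' Y : Type*} [PseudoMetricSpace X] [PseudoMetricSpace X'] [PseudoMetricSpace Y]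
    (y₀ : Y) (p C : ℝ) (hp : 1 ≤ p) (hC : 0 < C)
    {m n : ℕ} (hmn : m ≤ n)
    (v : Fin m → X) (e : Fin m → Fin m → Y)
    (w : Fin n → X) (f : Fin n → Fin n → Y)
    (he : IsGraph y₀ e) (hf : IsGraph y₀ f)
    (ιX : X → X') (hιX : ∀ x x', dist (ιX x) (ιX x') = dist x x')
    (xstar : X')
    (hxstar : ∀ x, dist (ιX x) xstar ^ p = C ^ p ∧ dist xstar (ιX x) ^ p = C ^ p)
    (v' : Fin (m + n) → X')
    (hv' : ∀ i : Fin (m + n), v' i = if h : (i : ℕ) < m then ιX (v ⟨i.1, h⟩) else xstar)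
    (e' : Fin (m + n) → Fin (m + n) → Y)
    (he' : ∀ i i' : Fin (m + n), e' i i' =
      if h : (i : ℕ) < m ∧ (i' : ℕ) < m then e ⟨i.1, h.1⟩ ⟨i'.1, h.2⟩ else y₀)
    (w' : Fin (m + n) → X')
    (hw' : ∀ j : Fin (m + n), w' j = if h : (j : ℕ) < n then ιX (w ⟨j.1, h⟩) else xstar)
    (f' : Fin (m + n) → Fin (m + n) → Y)
    (hf' : ∀ j j' : Fin (m + n), f' j j' =
      if h : (j : ℕ) < n ∧ (j' : ℕ) < n then f ⟨j.1, h.1⟩ ⟨j'.1, h.2⟩ else y₀) :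
    dGTT y₀ p C hmn v e w f =
      Finset.inf' Finset.univ Finset.univ_nonempty
        fun π : Equiv.Perm (Fin (m + n)) =>
          ((∑ i : Fin (m + n), dist (v' i) (w' (π i)) ^ p)
            + (1/2) * ∑ i : Fin (m + n), ∑ i' : Fin (m + n),
                dist (e' i i') (f' (π i) (π i')) ^ p) ^ (1/p) := by
  classical
  apply le_antisymm
  · refine Finset.le_inf' _ _ (fun π _ => ?_)
    obtain ⟨σ, hσ0⟩ := exists_sigma hmn π
    set I : Finset (Fin m) :=
      univ.filter (fun i => ((π (Fin.castLE (Nat.le_add_right m n) i)):ℕ) < n) with hIdef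
    have hI : ∀ i : Fin m, i ∈ I ↔ ((π (Fin.castLE (Nat.le_add_right m n) i)):ℕ) < n := by
      intro i; simp [hIdef]
    have hkey := gttVal_eq_cost y₀ p C hp hmn v e w f ιX hιX xstar hxstar v' hv' e' he'
      w' hw' f' hf' π I σ hI (fun i hi => hσ0 i ((hI i).1 hi))
    calc dGTT y₀ p C hmn v e w f ≤ gttVal y₀ p C hmn v e w f I σ :=
        Finset.inf'_le _ (Finset.mem_univ (I, σ))
      _ = _ := hkey
  · refine Finset.le_inf' _ _ (fun Iσ _ => ?_)
    obtain ⟨π, hI, hσ0⟩ := exists_pi hmn Iσ.1 Iσ.2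
    have hkey := gttVal_eq_cost y₀ p C hp hmn v e w f ιX hιX xstar hxstar v' hv' e' he'
      w' hw' f' hf' π Iσ.1 Iσ.2 hI hσ0
    exact le_trans (Finset.inf'_le _ (Finset.mem_univ π)) (le_of_eq hkey.symm)
end

section
/- Let n ∈ ℕ, let E ∈ ℝ^{n×n} be a symmetric matrix, let L ∈ ℝ^{n×n} be a symmetric matrix with nonnegative entries and zero diagonal, and let c > 0. Assume there are no symmetries, i.e. there is no permutation π ∈ S_n other than the identity such that both L_{i,π(i)} = 0 for all i ∈ [n] and E_{ii'} = E_{π(i)π(i')} for all i,i' ∈ [n]. Let D ⊆ ℝ^{n×n} be the set of doubly stochastic matrices (entries in [0,1], all row sums and column sums equal to 1). Then the set of minimizers over D of the function D ↦ −c·tr(E D Eᵀ Dᵀ) + tr(L Dᵀ) is exactly {I}, where I is the identity matrix. -/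
open Matrix Finset

lemma faq_permMatrix_apply {n : ℕ} (σ : Equiv.Perm (Fin n)) (i j : Fin n) :
    (σ.permMatrix ℝ) i j = if σ i = j then 1 else 0 := by
  simp [Equiv.Perm.permMatrix, PEquiv.toMatrix, Equiv.toPEquiv_apply, Option.mem_def, eq_comm]

lemma faq_trace_mul_transpose {n : ℕ} (A B : Matrix (Fin n) (Fin n) ℝ) :
    Matrix.trace (A * Bᵀ) = ∑ i, ∑ j, A i j * B i j := by
  simp [Matrix.trace, Matrix.diag, Matrix.mul_apply]

lemma faq_quad_perm {n : ℕ} (E : Matrix (Fin n) (Fin n) ℝ) (σ τ : Equiv.Perm (Fin n)) :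
    Matrix.trace (E * σ.permMatrix ℝ * Eᵀ * (τ.permMatrix ℝ)ᵀ) =
      ∑ i, ∑ k, E i k * E (τ i) (σ k) := by
  rw [faq_trace_mul_transpose]
  have h1 : ∀ i j, (E * σ.permMatrix ℝ * Eᵀ) i j * (τ.permMatrix ℝ) i j
      = if τ i = j then (E * σ.permMatrix ℝ * Eᵀ) i j else 0 := by
    intro i j; rw [faq_permMatrix_apply]; split <;> simp
  simp_rw [h1, Finset.sum_ite_eq Finset.univ, Finset.mem_univ, if_true]
  refine Finset.sum_congr rfl fun i _ => ?_
  rw [Matrix.mul_apply]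
  have h2 : ∀ k, (E * σ.permMatrix ℝ) i k = E i (σ.symm k) := by
    intro k
    rw [Matrix.mul_apply]
    simp_rw [faq_permMatrix_apply, mul_ite, mul_one, mul_zero]
    have : ∀ m : Fin n, (σ m = k) = (m = σ.symm k) := by
      intro m; simp [Equiv.apply_eq_iff_eq_symm_apply]
    simp_rw [this, Finset.sum_ite_eq' Finset.univ, Finset.mem_univ, if_true]
  simp_rw [h2, Matrix.transpose_apply]
  exact Fintype.sum_equiv σ.symm _ _ (fun k => by simp)

lemma faq_quad_sum {n : ℕ} (E : Matrix (Fin n) (Fin n) ℝ) (w : Equiv.Perm (Fin n) → ℝ)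
    (D : Matrix (Fin n) (Fin n) ℝ) (hD : ∑ σ, w σ • σ.permMatrix ℝ = D) :
    Matrix.trace (E * D * Eᵀ * Dᵀ) =
      ∑ σ, ∑ τ, w σ * w τ * Matrix.trace (E * σ.permMatrix ℝ * Eᵀ * (τ.permMatrix ℝ)ᵀ) := by
  subst hD
  simp only [Matrix.mul_sum, Matrix.sum_mul, Matrix.transpose_sum, Matrix.transpose_smul,
    Matrix.smul_mul, Matrix.mul_smul, Matrix.trace_sum, Matrix.trace_smul, smul_smul,
    smul_eq_mul, mul_assoc]
  simp_rw [Finset.mul_sum]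
  rw [Finset.sum_comm]
  exact Finset.sum_congr rfl fun a _ => Finset.sum_congr rfl fun b _ => by ring

lemma faq_sq_reindex {n : ℕ} (E : Matrix (Fin n) (Fin n) ℝ) (σ τ : Equiv.Perm (Fin n)) :
    ∑ i, ∑ k, E (τ i) (σ k) ^ 2 = ∑ i, ∑ k, E i k ^ 2 := by
  have h : ∀ a : Fin n, ∑ k, E a (σ k) ^ 2 = ∑ k, E a k ^ 2 := fun a =>
    Fintype.sum_equiv σ _ _ (fun k => rfl)
  exact Fintype.sum_equiv τ _ _ (fun i => by rw [h])

lemma faq_quad_perm_sum_le {n : ℕ} (E : Matrix (Fin n) (Fin n) ℝ) (σ τ : Equiv.Perm (Fin n)) :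
    ∑ i, ∑ k, E i k * E (τ i) (σ k) ≤ ∑ i, ∑ k, E i k ^ 2 := by
  have key : ∀ i k : Fin n, E i k * E (τ i) (σ k) ≤ (E i k ^ 2 + E (τ i) (σ k) ^ 2) / 2 :=
    fun i k => by nlinarith [sq_nonneg (E i k - E (τ i) (σ k))]
  calc ∑ i, ∑ k, E i k * E (τ i) (σ k)
      ≤ ∑ i, ∑ k, (E i k ^ 2 + E (τ i) (σ k) ^ 2) / 2 :=
        Finset.sum_le_sum fun i _ => Finset.sum_le_sum fun k _ => key i k
    _ = ((∑ i, ∑ k, E i k ^ 2) + ∑ i, ∑ k, E (τ i) (σ k) ^ 2) / 2 := by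
        simp_rw [← Finset.sum_add_distrib, Finset.sum_div]
    _ = ∑ i, ∑ k, E i k ^ 2 := by rw [faq_sq_reindex]; ring

lemma faq_quad_perm_eq_case {n : ℕ} (E : Matrix (Fin n) (Fin n) ℝ) (σ : Equiv.Perm (Fin n))
    (h : ∑ i, ∑ k, E i k * E (σ i) (σ k) = ∑ i, ∑ k, E i k ^ 2) :
    ∀ i k, E i k = E (σ i) (σ k) := by
  have h2 : ∑ i, ∑ k, (E i k - E (σ i) (σ k)) ^ 2 = 0 := by
    have expand : ∀ i k : Fin n, (E i k - E (σ i) (σ k)) ^ 2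
        = E i k ^ 2 - 2 * (E i k * E (σ i) (σ k)) + E (σ i) (σ k) ^ 2 := fun i k => by ring
    simp_rw [expand, Finset.sum_add_distrib, Finset.sum_sub_distrib, ← Finset.mul_sum]
    rw [faq_sq_reindex E σ σ, h]
    ring
  intro i k
  have h3 := (Finset.sum_eq_zero_iff_of_nonneg
    (fun i _ => Finset.sum_nonneg fun k _ => sq_nonneg _)).mp h2 i (Finset.mem_univ i)
  have h4 := (Finset.sum_eq_zero_iff_of_nonneg
    (fun k _ => sq_nonneg _)).mp h3 k (Finset.mem_univ k)
  have h5 := pow_eq_zero_iff (n := 2) (by norm_num) |>.mp h4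
  linarith [h5]

/-- Proposition: uniqueness of the relaxed FAQ minimizer. For a
symmetric matrix `E`, a symmetric nonnegative matrix `L` with zero diagonal, and `c > 0`,
if the graph has no symmetries (no nonidentity permutation `π` with `L i (π i) = 0` for
all `i` and `E i i' = E (π i) (π i')` for all `i, i'`), then the unique minimizer over the
doubly stochastic matrices of `D ↦ −c·tr(E D Eᵀ Dᵀ) + tr(L Dᵀ)` is the identity matrix. -/
theorem faq_relaxed_unique_minimizer {n : ℕ} (c : ℝ) (hc : 0 < c)
    (E L : Matrix (Fin n) (Fin n) ℝ)
    (hE : E.IsSymm) (hL : L.IsSymm)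
    (hL0 : ∀ i j, 0 ≤ L i j) (hLdiag : ∀ i, L i i = 0)
    (hNoSym : ¬ ∃ π : Equiv.Perm (Fin n), π ≠ 1 ∧
      (∀ i, L i (π i) = 0) ∧ ∀ i i', E i i' = E (π i) (π i')) :
    {D : Matrix (Fin n) (Fin n) ℝ |
      ((∀ i j, 0 ≤ D i j ∧ D i j ≤ 1) ∧ (∀ i, ∑ j, D i j = 1) ∧ (∀ j, ∑ i, D i j = 1)) ∧
      ∀ D' : Matrix (Fin n) (Fin n) ℝ,
        ((∀ i j, 0 ≤ D' i j ∧ D' i j ≤ 1) ∧ (∀ i, ∑ j, D' i j = 1) ∧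
          (∀ j, ∑ i, D' i j = 1)) →
        -c * Matrix.trace (E * D * Eᵀ * Dᵀ) + Matrix.trace (L * Dᵀ) ≤
          -c * Matrix.trace (E * D' * Eᵀ * D'ᵀ) + Matrix.trace (L * D'ᵀ)} = {1} := by
  set S : ℝ := ∑ i, ∑ k, E i k ^ 2 with hSdef
  -- basic facts
  have hQ1 : Matrix.trace (E * 1 * Eᵀ * (1 : Matrix (Fin n) (Fin n) ℝ)ᵀ) = S := by
    rw [mul_one, Matrix.transpose_one, mul_one, faq_trace_mul_transpose]
    exact Finset.sum_congr rfl fun i _ => Finset.sum_congr rfl fun j _ => (pow_two _).symm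
  have hL1 : Matrix.trace (L * (1 : Matrix (Fin n) (Fin n) ℝ)ᵀ) = 0 := by
    rw [faq_trace_mul_transpose]
    simp [Matrix.one_apply, mul_ite, Finset.sum_ite_eq, hLdiag]
  have hC1 : (∀ i j : Fin n, 0 ≤ (1 : Matrix (Fin n) (Fin n) ℝ) i j ∧
      (1 : Matrix (Fin n) (Fin n) ℝ) i j ≤ 1) ∧
      (∀ i, ∑ j, (1 : Matrix (Fin n) (Fin n) ℝ) i j = 1) ∧
      (∀ j, ∑ i, (1 : Matrix (Fin n) (Fin n) ℝ) i j = 1) := by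
    refine ⟨fun i j => ?_, fun i => ?_, fun j => ?_⟩
    · constructor <;> (rw [Matrix.one_apply]; split <;> norm_num)
    · simp [Matrix.one_apply]
    · simp [Matrix.one_apply]
  have hLpos : ∀ D' : Matrix (Fin n) (Fin n) ℝ, (∀ i j, 0 ≤ D' i j) →
      0 ≤ Matrix.trace (L * D'ᵀ) := by
    intro D' h
    rw [faq_trace_mul_transpose]
    exact Finset.sum_nonneg fun i _ => Finset.sum_nonneg fun j _ =>
      mul_nonneg (hL0 i j) (h i j)
  have hsumS : ∀ w : Equiv.Perm (Fin n) → ℝ, ∑ σ, w σ = 1 →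
      ∑ σ : Equiv.Perm (Fin n), ∑ τ : Equiv.Perm (Fin n), w σ * w τ * S = S := by
    intro w hw1
    have : ∑ σ : Equiv.Perm (Fin n), ∑ τ : Equiv.Perm (Fin n), w σ * w τ * S
        = ((∑ σ, w σ) * (∑ τ, w τ)) * S := by
      rw [Finset.sum_mul_sum, Finset.sum_mul]
      exact Finset.sum_congr rfl fun σ _ => by rw [Finset.sum_mul]
    rw [this, hw1, one_mul, one_mul]
  have hQle : ∀ w : Equiv.Perm (Fin n) → ℝ, (∀ σ, 0 ≤ w σ) → (∑ σ, w σ = 1) →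
      ∑ σ : Equiv.Perm (Fin n), ∑ τ : Equiv.Perm (Fin n),
        w σ * w τ * Matrix.trace (E * σ.permMatrix ℝ * Eᵀ * (τ.permMatrix ℝ)ᵀ) ≤ S := by
    intro w hw0 hw1
    calc ∑ σ : Equiv.Perm (Fin n), ∑ τ : Equiv.Perm (Fin n),
          w σ * w τ * Matrix.trace (E * σ.permMatrix ℝ * Eᵀ * (τ.permMatrix ℝ)ᵀ)
        ≤ ∑ σ : Equiv.Perm (Fin n), ∑ τ : Equiv.Perm (Fin n), w σ * w τ * S := by
          refine Finset.sum_le_sum fun σ _ => Finset.sum_le_sum fun τ _ => ?_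
          refine mul_le_mul_of_nonneg_left ?_ (mul_nonneg (hw0 σ) (hw0 τ))
          rw [faq_quad_perm]
          exact faq_quad_perm_sum_le E σ τ
      _ = S := hsumS w hw1
  have hQleD : ∀ D : Matrix (Fin n) (Fin n) ℝ, D ∈ doublyStochastic ℝ (Fin n) →
      Matrix.trace (E * D * Eᵀ * Dᵀ) ≤ S := by
    intro D hD
    obtain ⟨w, hw0, hw1, hwD⟩ := exists_eq_sum_perm_of_mem_doublyStochastic hD
    rw [faq_quad_sum E w D hwD]
    exact hQle w hw0 hw1
  ext D
  simp only [Set.mem_setOf_eq, Set.mem_singleton_iff]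
  constructor
  · rintro ⟨hC, hmin⟩
    have hDds : D ∈ doublyStochastic ℝ (Fin n) :=
      mem_doublyStochastic_iff_sum.mpr ⟨fun i j => (hC.1 i j).1, hC.2.1, hC.2.2⟩
    obtain ⟨w, hw0, hw1, hwD⟩ := exists_eq_sum_perm_of_mem_doublyStochastic hDds
    have hmin1 := hmin 1 hC1
    rw [hQ1, hL1] at hmin1
    have hQD : Matrix.trace (E * D * Eᵀ * Dᵀ) ≤ S := hQleD D hDds
    have hTD : 0 ≤ Matrix.trace (L * Dᵀ) := hLpos D (fun i j => (hC.1 i j).1)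
    have hQeq : Matrix.trace (E * D * Eᵀ * Dᵀ) = S := by nlinarith
    have hTeq : Matrix.trace (L * Dᵀ) = 0 := by nlinarith
    -- pointwise equality of the quadratic terms
    have hflat : ∑ p : Equiv.Perm (Fin n) × Equiv.Perm (Fin n),
        w p.1 * w p.2 * Matrix.trace (E * p.1.permMatrix ℝ * Eᵀ * (p.2.permMatrix ℝ)ᵀ)
        = ∑ p : Equiv.Perm (Fin n) × Equiv.Perm (Fin n), w p.1 * w p.2 * S := by
      rw [Fintype.sum_prod_type, Fintype.sum_prod_type]
      rw [← faq_quad_sum E w D hwD, hQeq]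
      exact (hsumS w hw1).symm
    have hpt : ∀ p : Equiv.Perm (Fin n) × Equiv.Perm (Fin n),
        w p.1 * w p.2 * Matrix.trace (E * p.1.permMatrix ℝ * Eᵀ * (p.2.permMatrix ℝ)ᵀ)
        = w p.1 * w p.2 * S := by
      have hle : ∀ p ∈ (Finset.univ : Finset (Equiv.Perm (Fin n) × Equiv.Perm (Fin n))),
          w p.1 * w p.2 * Matrix.trace (E * p.1.permMatrix ℝ * Eᵀ * (p.2.permMatrix ℝ)ᵀ)
          ≤ w p.1 * w p.2 * S := by
        intro p _
        refine mul_le_mul_of_nonneg_left ?_ (mul_nonneg (hw0 p.1) (hw0 p.2))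
        rw [faq_quad_perm]
        exact faq_quad_perm_sum_le E p.1 p.2
      intro p
      exact (Finset.sum_eq_sum_iff_of_le hle).mp hflat p (Finset.mem_univ p)
    -- L·D entries vanish
    have hLD : ∀ i j, L i j * D i j = 0 := by
      have h0 := hTeq
      rw [faq_trace_mul_transpose] at h0
      intro i j
      have h3 := (Finset.sum_eq_zero_iff_of_nonneg
        (fun i _ => Finset.sum_nonneg fun j _ => mul_nonneg (hL0 i j) ((hC.1 i j).1))).mp
        h0 i (Finset.mem_univ i)
      exact (Finset.sum_eq_zero_iff_of_nonneg
        (fun j _ => mul_nonneg (hL0 i j) ((hC.1 i j).1))).mp h3 j (Finset.mem_univ j)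
    -- every permutation in the support is the identity
    have hall : ∀ σ : Equiv.Perm (Fin n), σ ≠ 1 → w σ = 0 := by
      intro σ hσ
      by_contra hwσ
      have hwσpos : 0 < w σ := lt_of_le_of_ne (hw0 σ) (Ne.symm hwσ)
      -- E-invariance
      have hBσ := hpt (σ, σ)
      simp only at hBσ
      have hB : Matrix.trace (E * σ.permMatrix ℝ * Eᵀ * (σ.permMatrix ℝ)ᵀ) = S :=
        mul_left_cancel₀ (by positivity) hBσ
      rw [faq_quad_perm] at hB
      have hEinv := faq_quad_perm_eq_case E σ hB
      -- L vanishes along σ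
      have hLσ : ∀ i, L i (σ i) = 0 := by
        intro i
        have hDpos : w σ ≤ D i (σ i) := by
          rw [← hwD]
          have : ∀ τ : Equiv.Perm (Fin n),
              (w τ • τ.permMatrix ℝ) i (σ i) = w τ * (τ.permMatrix ℝ) i (σ i) := fun τ => rfl
          rw [Matrix.sum_apply]
          simp_rw [this]
          have hself : w σ * (σ.permMatrix ℝ) i (σ i) = w σ := by
            rw [faq_permMatrix_apply]; simp
          calc w σ = w σ * (σ.permMatrix ℝ) i (σ i) := hself.symm
            _ ≤ ∑ τ : Equiv.Perm (Fin n), w τ * (τ.permMatrix ℝ) i (σ i) := by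
                refine Finset.single_le_sum (f := fun τ : Equiv.Perm (Fin n) =>
                  w τ * (τ.permMatrix ℝ) i (σ i)) (fun τ _ => ?_) (Finset.mem_univ σ)
                refine mul_nonneg (hw0 τ) ?_
                rw [faq_permMatrix_apply]; split <;> norm_num
        have := hLD i (σ i)
        rcases mul_eq_zero.mp this with h | h
        · exact h
        · exact absurd h (ne_of_gt (lt_of_lt_of_le hwσpos hDpos))
      exact hNoSym ⟨σ, hσ, hLσ, hEinv⟩
    -- conclude D = 1
    have hw1' : w 1 = 1 := by
      rw [← hw1, Fintype.sum_eq_single 1 (fun σ hσ => hall σ hσ)]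
    have hP1 : (1 : Equiv.Perm (Fin n)).permMatrix ℝ = (1 : Matrix (Fin n) (Fin n) ℝ) := by
      ext i j
      rw [faq_permMatrix_apply, Matrix.one_apply]
      simp
      exact if_congr Iff.rfl rfl rfl
    rw [← hwD, Fintype.sum_eq_single 1 (fun σ hσ => by rw [hall σ hσ, zero_smul]),
      hw1', one_smul, hP1]
  · rintro rfl
    refine ⟨hC1, fun D' hC' => ?_⟩
    have hD's : D' ∈ doublyStochastic ℝ (Fin n) :=
      mem_doublyStochastic_iff_sum.mpr ⟨fun i j => (hC'.1 i j).1, hC'.2.1, hC'.2.2⟩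
    have h1 := hQleD D' hD's
    have h2 := hLpos D' (fun i j => (hC'.1 i j).1)
    rw [hQ1, hL1]
    nlinarith
end
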